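/- Let E < E₀ and ρ ∈ 𝓜. The functional φ ↦ 𝓖_E(ρ,φ) is strictly concave on 𝓕_E: for φ₁, φ₂ ∈ 𝓕_E with φ₁ ≠ φ₂ and t ∈ (0,1), the function tφ₁+(1−t)φ₂ belongs to 𝓕_E and 𝓖_E(ρ, tφ₁+(1−t)φ₂) > t 𝓖_E(ρ,φ₁) + (1−t) 𝓖_E(ρ,φ₂). -/

import Mathlib

open Real MeasureTheory Set Filter Topology Function

noncomputable section

/-- Mobility `χ(a) = a(1−a)`. -/
def chi (a : ℝ) : ℝ := a * (1 - a)

/-- The set `𝓜`: measurable density profiles on `[−1,1]` with values in `[0,1]`. -/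
def memM (ρ : ℝ → ℝ) : Prop :=
  Measurable ρ ∧ ∀ u ∈ Set.Icc (-1:ℝ) 1, ρ u ∈ Set.Icc (0:ℝ) 1

/-- `φ ∈ 𝓕_E`, with explicit derivative function `d`: `φ` is `C¹` on `[−1,1]` with
Lipschitz derivative `d`, `φ(−1) = φ₋`, `φ(1) = φ₊`, and `d > max 0 E` on `[−1,1]`. -/
def memF (φm φp E : ℝ) (φ d : ℝ → ℝ) : Prop :=
  (∀ u ∈ Set.Icc (-1:ℝ) 1, HasDerivWithinAt φ (d u) (Set.Icc (-1:ℝ) 1) u) ∧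
  (∃ L : NNReal, LipschitzOnWith L d (Set.Icc (-1:ℝ) 1)) ∧
  φ (-1) = φm ∧ φ 1 = φp ∧
  (∀ u ∈ Set.Icc (-1:ℝ) 1, max 0 E < d u)

/-- The functional `𝓖_E(ρ,φ)` (with `d = φ'`), including the `E = 0` case.
Recall the convention `0 log 0 = 0` (in Lean `Real.log 0 = 0`). -/
def GEint (E A : ℝ) (ρ φ d : ℝ → ℝ) : ℝ :=
  ∫ u in (-1:ℝ)..1,
    (ρ u * Real.log (ρ u) + (1 - ρ u) * Real.log (1 - ρ u)
      + (1 - ρ u) * φ u - Real.log (1 + Real.exp (φ u))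
      + (if E = 0 then Real.log (d u) + 1
         else E⁻¹ * (d u * Real.log (d u) - (d u - E) * Real.log (d u - E)))
      - A)

/-- The entropy-like term in the integrand, as a function of the derivative value. -/
def Fent (E x : ℝ) : ℝ :=
  if E = 0 then Real.log x + 1
  else E⁻¹ * (x * Real.log x - (x - E) * Real.log (x - E))

/-- The full integrand of `GEint`. -/
def integrandG (E A : ℝ) (ρ φ d : ℝ → ℝ) (u : ℝ) : ℝ :=
  ρ u * Real.log (ρ u) + (1 - ρ u) * Real.log (1 - ρ u) + (1 - ρ u) * φ u
    - Real.log (1 + Real.exp (φ u)) + Fent E (d u) - A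

lemma GEint_eq (E A : ℝ) (ρ φ d : ℝ → ℝ) :
    GEint E A ρ φ d = ∫ u in (-1:ℝ)..1, integrandG E A ρ φ d u := rfl

lemma strictConcave_H :
    StrictConcaveOn ℝ (Set.univ : Set ℝ) (fun x => -Real.log (1 + Real.exp x)) := by
  have key : ∀ y : ℝ, HasDerivAt (fun x => -Real.log (1 + Real.exp x))
      (-(Real.exp y / (1 + Real.exp y))) y := by
    intro y
    have h1 : (0:ℝ) < 1 + Real.exp y := by positivity
    exact (((Real.hasDerivAt_exp y).const_add 1).log h1.ne').neg
  apply strictConcaveOn_of_deriv2_neg convex_univ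
  · exact (continuousOn_const.add (Real.continuous_exp.continuousOn)).log
      (fun x _ => (by positivity : (0:ℝ) < 1 + Real.exp x).ne') |>.neg
  · intro x _
    have hd : deriv (fun x => -Real.log (1 + Real.exp x))
        = fun y => -(Real.exp y / (1 + Real.exp y)) := funext fun y => (key y).deriv
    have h1 : (0:ℝ) < 1 + Real.exp x := by positivity
    have h2 : HasDerivAt (fun y : ℝ => -(Real.exp y / (1 + Real.exp y)))
        (-((Real.exp x * (1 + Real.exp x) - Real.exp x * Real.exp x) / (1 + Real.exp x) ^ 2)) x :=
      ((Real.hasDerivAt_exp x).div ((Real.hasDerivAt_exp x).const_add 1) h1.ne').neg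
    have h3 : Real.exp x * (1 + Real.exp x) - Real.exp x * Real.exp x = Real.exp x := by ring
    rw [h3] at h2
    show deriv (deriv fun x => -Real.log (1 + Real.exp x)) x < 0
    rw [hd, h2.deriv]
    have : 0 < Real.exp x / (1 + Real.exp x) ^ 2 := by positivity
    linarith

lemma strictConcave_F (E : ℝ) :
    StrictConcaveOn ℝ (Set.Ioi (max 0 E)) (Fent E) := by
  rcases eq_or_ne E 0 with rfl | hE
  · have : Fent 0 = fun x => Real.log x + 1 := by
      funext x; simp [Fent]
    rw [this, show max (0:ℝ) 0 = 0 from max_self 0]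
    exact strictConcaveOn_log_Ioi.add_const 1
  · have hmem : ∀ y ∈ Set.Ioi (max 0 E), y ≠ 0 ∧ y - E ≠ 0 := by
      intro y hy
      have hy0 : (0:ℝ) < y := lt_of_le_of_lt (le_max_left 0 E) hy
      have hyE : E < y := lt_of_le_of_lt (le_max_right 0 E) hy
      exact ⟨hy0.ne', (sub_pos.mpr hyE).ne'⟩
    have hF : Fent E = fun x => E⁻¹ * (x * Real.log x - (x - E) * Real.log (x - E)) := by
      funext x; simp [Fent, hE]
    rw [hF]
    apply strictConcaveOn_of_deriv2_neg (convex_Ioi _)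
    · apply ContinuousOn.mul continuousOn_const
      apply ContinuousOn.sub
      · exact continuousOn_id.mul (continuousOn_id.log fun y hy => (hmem y hy).1)
      · exact (continuousOn_id.sub continuousOn_const).mul
          ((continuousOn_id.sub continuousOn_const).log fun y hy => (hmem y hy).2)
    · intro x hx
      rw [interior_Ioi] at hx
      have hx0 : (0:ℝ) < x := lt_of_le_of_lt (le_max_left 0 E) hx
      have hxE : (0:ℝ) < x - E := sub_pos.mpr (lt_of_le_of_lt (le_max_right 0 E) hx)
      set g : ℝ → ℝ := fun y => E⁻¹ * (Real.log y - Real.log (y - E)) with hg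
      have hder : ∀ y ∈ Set.Ioi (max 0 E),
          HasDerivAt (fun x => E⁻¹ * (x * Real.log x - (x - E) * Real.log (x - E))) (g y) y := by
        intro y hy
        have hy0 : (0:ℝ) < y := lt_of_le_of_lt (le_max_left 0 E) hy
        have hyE : (0:ℝ) < y - E := sub_pos.mpr (lt_of_le_of_lt (le_max_right 0 E) hy)
        have h1 := Real.hasDerivAt_mul_log hy0.ne'
        have h2 : HasDerivAt (fun y => (y - E) * Real.log (y - E)) (Real.log (y - E) + 1) y := by
          have := (Real.hasDerivAt_mul_log hyE.ne').comp y ((hasDerivAt_id y).sub_const E)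
          simpa [Function.comp_def] using this
        have := (h1.sub h2).const_mul E⁻¹
        refine this.congr_deriv ?_
        show _ = E⁻¹ * (Real.log y - Real.log (y - E)); ring
      have h3 : deriv (fun x => E⁻¹ * (x * Real.log x - (x - E) * Real.log (x - E))) =ᶠ[𝓝 x] g := by
        filter_upwards [isOpen_Ioi.mem_nhds hx] with y hy
        exact (hder y hy).deriv
      show deriv (deriv fun x => E⁻¹ * (x * Real.log x - (x - E) * Real.log (x - E))) x < 0
      rw [h3.deriv_eq]
      have h4 : HasDerivAt g (E⁻¹ * (x⁻¹ - (x - E)⁻¹)) x := by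
        have hlog2 : HasDerivAt (fun y : ℝ => Real.log (y - E)) (x - E)⁻¹ x := by
          have := (Real.hasDerivAt_log hxE.ne').comp x ((hasDerivAt_id x).sub_const E)
          simpa [Function.comp_def] using this
        exact ((Real.hasDerivAt_log hx0.ne').sub hlog2).const_mul E⁻¹
      rw [h4.deriv]
      have heq : E⁻¹ * (x⁻¹ - (x - E)⁻¹) = -(x * (x - E))⁻¹ := by
        field_simp
        ring
      rw [heq]
      have : 0 < (x * (x - E))⁻¹ := by positivity
      linarith

lemma comb_le {s : Set ℝ} {f : ℝ → ℝ} (hf : StrictConcaveOn ℝ s f) {a b t : ℝ}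
    (ha : a ∈ s) (hb : b ∈ s) (ht0 : 0 < t) (ht1 : t < 1) :
    t * f a + (1 - t) * f b ≤ f (t * a + (1 - t) * b) := by
  rcases eq_or_ne a b with rfl | hab
  · have h1 : t * a + (1 - t) * a = a := by ring
    rw [h1]; nlinarith [hf.1]
  · have := hf.2 ha hb hab ht0 (by linarith : (0:ℝ) < 1 - t) (by ring)
    simpa [smul_eq_mul] using this.le

lemma comb_lt {s : Set ℝ} {f : ℝ → ℝ} (hf : StrictConcaveOn ℝ s f) {a b t : ℝ}
    (ha : a ∈ s) (hb : b ∈ s) (hab : a ≠ b) (ht0 : 0 < t) (ht1 : t < 1) :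
    t * f a + (1 - t) * f b < f (t * a + (1 - t) * b) := by
  have := hf.2 ha hb hab ht0 (by linarith : (0:ℝ) < 1 - t) (by ring)
  simpa [smul_eq_mul] using this

lemma contFent (E : ℝ) {d : ℝ → ℝ} {s : Set ℝ} (hd : ContinuousOn d s)
    (hpos : ∀ u ∈ s, max 0 E < d u) : ContinuousOn (fun u => Fent E (d u)) s := by
  have hd0 : ∀ u ∈ s, d u ≠ 0 :=
    fun u hu => (lt_of_le_of_lt (le_max_left 0 E) (hpos u hu)).ne'
  have hdE : ∀ u ∈ s, d u - E ≠ 0 :=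
    fun u hu => (sub_pos.mpr (lt_of_le_of_lt (le_max_right 0 E) (hpos u hu))).ne'
  rcases eq_or_ne E 0 with rfl | hE
  · have : (fun u => Fent 0 (d u)) = fun u => Real.log (d u) + 1 := by
      funext u; simp [Fent]
    rw [this]
    exact (hd.log hd0).add continuousOn_const
  · have : (fun u => Fent E (d u)) =
        fun u => E⁻¹ * (d u * Real.log (d u) - (d u - E) * Real.log (d u - E)) := by
      funext u; simp [Fent, hE]
    rw [this]
    exact continuousOn_const.mul ((hd.mul (hd.log hd0)).sub
      ((hd.sub continuousOn_const).mul ((hd.sub continuousOn_const).log hdE)))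

lemma xlogx_bound {x : ℝ} (h : x ∈ Set.Icc (0:ℝ) 1) : |x * Real.log x| ≤ 1 := by
  rcases eq_or_lt_of_le h.1 with rfl | hx
  · simp
  · rw [mul_comm]
    exact (Real.abs_log_mul_self_lt x hx h.2).le

lemma integrandIntble (E A : ℝ) (ρ φ d : ℝ → ℝ) (hρ : memM ρ)
    (hφ : ContinuousOn φ (Set.Icc (-1:ℝ) 1)) (hd : ContinuousOn d (Set.Icc (-1:ℝ) 1))
    (hpos : ∀ u ∈ Set.Icc (-1:ℝ) 1, max 0 E < d u) :
    IntervalIntegrable (integrandG E A ρ φ d) volume (-1) 1 := by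
  rw [intervalIntegrable_iff_integrableOn_Ioc_of_le (by norm_num : (-1:ℝ) ≤ 1)]
  set C : ℝ → ℝ := fun u => -Real.log (1 + Real.exp (φ u)) + Fent E (d u) - A with hC
  have hCc : ContinuousOn C (Set.Icc (-1:ℝ) 1) := by
    apply ContinuousOn.sub _ continuousOn_const
    apply ContinuousOn.add _ (contFent E hd hpos)
    exact ((continuousOn_const.add (Real.continuous_exp.comp_continuousOn hφ)).log
      (fun u _ => by simp only [Function.comp_apply, Pi.add_apply]; positivity)).neg
  obtain ⟨M, hM⟩ := isCompact_Icc.exists_bound_of_continuousOn hCc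
  obtain ⟨Mφ, hMφ⟩ := isCompact_Icc.exists_bound_of_continuousOn hφ
  have hIoc : Set.Ioc (-1:ℝ) 1 ⊆ Set.Icc (-1:ℝ) 1 := Set.Ioc_subset_Icc_self
  have heq : integrandG E A ρ φ d
      = fun u => (ρ u * Real.log (ρ u) + (1 - ρ u) * Real.log (1 - ρ u)
        + (1 - ρ u) * φ u) + C u := by
    funext u; simp only [hC, integrandG]; ring
  rw [heq]
  have hmesM : AEStronglyMeasurable
      (fun u => ρ u * Real.log (ρ u) + (1 - ρ u) * Real.log (1 - ρ u) + (1 - ρ u) * φ u)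
      (volume.restrict (Set.Ioc (-1:ℝ) 1)) := by
    have h1 : Measurable fun u => ρ u * Real.log (ρ u) + (1 - ρ u) * Real.log (1 - ρ u) :=
      (hρ.1.mul (Real.measurable_log.comp hρ.1)).add
        ((measurable_const.sub hρ.1).mul
          (Real.measurable_log.comp (measurable_const.sub hρ.1)))
    have h2 : AEStronglyMeasurable φ (volume.restrict (Set.Ioc (-1:ℝ) 1)) :=
      (hφ.mono hIoc).aestronglyMeasurable measurableSet_Ioc
    exact h1.aestronglyMeasurable.add
      (((measurable_const.sub hρ.1).aestronglyMeasurable).mul h2)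
  have hmesC : AEStronglyMeasurable C (volume.restrict (Set.Ioc (-1:ℝ) 1)) :=
    (hCc.mono hIoc).aestronglyMeasurable measurableSet_Ioc
  refine ⟨hmesM.add hmesC, ?_⟩
  apply MeasureTheory.HasFiniteIntegral.restrict_of_bounded
    (C := 1 + 1 + Mφ + M) (measure_Ioc_lt_top)
  filter_upwards [ae_restrict_mem measurableSet_Ioc] with u hu
  have hu' : u ∈ Set.Icc (-1:ℝ) 1 := hIoc hu
  have hρu := hρ.2 u hu'
  have h1 : |ρ u * Real.log (ρ u)| ≤ 1 := xlogx_bound hρu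
  have h2 : |(1 - ρ u) * Real.log (1 - ρ u)| ≤ 1 := by
    apply xlogx_bound
    constructor <;> [linarith [hρu.2]; linarith [hρu.1]]
  have h3 : |(1 - ρ u) * φ u| ≤ Mφ := by
    rw [abs_mul]
    calc |1 - ρ u| * |φ u| ≤ 1 * |φ u| := by
          apply mul_le_mul_of_nonneg_right _ (abs_nonneg _)
          rw [abs_le]; constructor <;> [linarith [hρu.2]; linarith [hρu.1]]
      _ = |φ u| := one_mul _
      _ ≤ Mφ := hMφ u hu'
  have h4 : |C u| ≤ M := hM u hu'
  have habs : |ρ u * Real.log (ρ u) + (1 - ρ u) * Real.log (1 - ρ u) + (1 - ρ u) * φ u + C u|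
      ≤ |ρ u * Real.log (ρ u)| + |(1 - ρ u) * Real.log (1 - ρ u)| + |(1 - ρ u) * φ u| + |C u| := by
    calc _ ≤ |ρ u * Real.log (ρ u) + (1 - ρ u) * Real.log (1 - ρ u) + (1 - ρ u) * φ u| + |C u| :=
          abs_add_le _ _
      _ ≤ |ρ u * Real.log (ρ u) + (1 - ρ u) * Real.log (1 - ρ u)| + |(1 - ρ u) * φ u| + |C u| := by
          have := abs_add_le (ρ u * Real.log (ρ u) + (1 - ρ u) * Real.log (1 - ρ u))
            ((1 - ρ u) * φ u)
          linarith
      _ ≤ _ := by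
          have := abs_add_le (ρ u * Real.log (ρ u)) ((1 - ρ u) * Real.log (1 - ρ u))
          linarith
  rw [Real.norm_eq_abs]
  linarith

/-- Strict concavity of `φ ↦ 𝓖_E(ρ,φ)` on `𝓕_E`. -/
theorem stmt8 (ρm ρp φm φp E0 : ℝ)
    (h0 : 0 < ρm) (h1 : ρm < ρp) (h2 : ρp < 1)
    (hφm : φm = Real.log (ρm / (1 - ρm))) (hφp : φp = Real.log (ρp / (1 - ρp)))
    (hE0 : E0 = (φp - φm) / 2) (E J A : ℝ) (hE : E < E0)
    (hJneg : J ≤ 0) (hJeq : (1/2) * (∫ r in ρm..ρp, (E * chi r - J)⁻¹) = 1)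
    (hA : A = if E = 0 then Real.log ((ρp - ρm) / 2) + 1
      else Real.log (-J) + (1/2) * ∫ r in ρm..ρp, (E * chi r)⁻¹ * Real.log (1 - E * chi r / J))
    (ρ : ℝ → ℝ) (hρ : memM ρ)
    (φ1 d1 φ2 d2 : ℝ → ℝ)
    (h1F : memF φm φp E φ1 d1) (h2F : memF φm φp E φ2 d2)
    (hne : ¬ Set.EqOn φ1 φ2 (Set.Icc (-1:ℝ) 1))
    (t : ℝ) (ht : t ∈ Set.Ioo (0:ℝ) 1) :
    memF φm φp E (fun u => t * φ1 u + (1 - t) * φ2 u)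
      (fun u => t * d1 u + (1 - t) * d2 u) ∧
    t * GEint E A ρ φ1 d1 + (1 - t) * GEint E A ρ φ2 d2 <
      GEint E A ρ (fun u => t * φ1 u + (1 - t) * φ2 u)
        (fun u => t * d1 u + (1 - t) * d2 u) := by
  obtain ⟨ht0, ht1⟩ := ht
  obtain ⟨hD1, ⟨L1, hL1⟩, hm1, hp1, hlow1⟩ := h1F
  obtain ⟨hD2, ⟨L2, hL2⟩, hm2, hp2, hlow2⟩ := h2F
  have hIcc : (-1:ℝ) ≤ 1 := by norm_num
  -- continuity facts
  have hφ1c : ContinuousOn φ1 (Set.Icc (-1:ℝ) 1) :=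
    fun u hu => (hD1 u hu).continuousWithinAt
  have hφ2c : ContinuousOn φ2 (Set.Icc (-1:ℝ) 1) :=
    fun u hu => (hD2 u hu).continuousWithinAt
  have hd1c : ContinuousOn d1 (Set.Icc (-1:ℝ) 1) := hL1.continuousOn
  have hd2c : ContinuousOn d2 (Set.Icc (-1:ℝ) 1) := hL2.continuousOn
  have hφcc : ContinuousOn (fun u => t * φ1 u + (1 - t) * φ2 u) (Set.Icc (-1:ℝ) 1) :=
    (continuousOn_const.mul hφ1c).add (continuousOn_const.mul hφ2c)
  have hdcc : ContinuousOn (fun u => t * d1 u + (1 - t) * d2 u) (Set.Icc (-1:ℝ) 1) :=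
    (continuousOn_const.mul hd1c).add (continuousOn_const.mul hd2c)
  have hlowc : ∀ u ∈ Set.Icc (-1:ℝ) 1, max 0 E < t * d1 u + (1 - t) * d2 u := by
    intro u hu
    have e1 := hlow1 u hu
    have e2 := hlow2 u hu
    nlinarith
  -- the Lipschitz bound for the combination
  have hLc : LipschitzOnWith (L1 + L2) (fun u => t * d1 u + (1 - t) * d2 u)
      (Set.Icc (-1:ℝ) 1) := by
    rw [lipschitzOnWith_iff_dist_le_mul]
    intro x hx y hy
    have e1 := (lipschitzOnWith_iff_dist_le_mul.mp hL1) x hx y hy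
    have e2 := (lipschitzOnWith_iff_dist_le_mul.mp hL2) x hx y hy
    simp only [Real.dist_eq] at e1 e2 ⊢
    have hre : t * d1 x + (1 - t) * d2 x - (t * d1 y + (1 - t) * d2 y)
        = t * (d1 x - d1 y) + (1 - t) * (d2 x - d2 y) := by ring
    rw [hre, NNReal.coe_add]
    have f1 : t * |d1 x - d1 y| ≤ t * (↑L1 * |x - y|) := mul_le_mul_of_nonneg_left e1 ht0.le
    have f2 : (1 - t) * |d2 x - d2 y| ≤ (1 - t) * (↑L2 * |x - y|) :=
      mul_le_mul_of_nonneg_left e2 (by linarith)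
    have f3 : (0:ℝ) ≤ ↑L1 * |x - y| := mul_nonneg L1.coe_nonneg (abs_nonneg _)
    have f4 : (0:ℝ) ≤ ↑L2 * |x - y| := mul_nonneg L2.coe_nonneg (abs_nonneg _)
    calc |t * (d1 x - d1 y) + (1 - t) * (d2 x - d2 y)|
        ≤ |t * (d1 x - d1 y)| + |(1 - t) * (d2 x - d2 y)| := abs_add_le _ _
      _ = t * |d1 x - d1 y| + (1 - t) * |d2 x - d2 y| := by
          rw [abs_mul, abs_mul, abs_of_pos ht0, abs_of_pos (by linarith : (0:ℝ) < 1 - t)]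
      _ ≤ (↑L1 + ↑L2) * |x - y| := by nlinarith
  have hmemF : memF φm φp E (fun u => t * φ1 u + (1 - t) * φ2 u)
      (fun u => t * d1 u + (1 - t) * d2 u) := by
    refine ⟨?_, ⟨L1 + L2, hLc⟩, ?_, ?_, hlowc⟩
    · intro u hu
      exact ((hD1 u hu).const_mul t).add ((hD2 u hu).const_mul (1 - t))
    · simp only [hm1, hm2]; ring
    · simp only [hp1, hp2]; ring
  refine ⟨hmemF, ?_⟩
  -- the strict-concavity gap
  set g : ℝ → ℝ := fun u =>
    (t * Real.log (1 + Real.exp (φ1 u)) + (1 - t) * Real.log (1 + Real.exp (φ2 u))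
      - Real.log (1 + Real.exp (t * φ1 u + (1 - t) * φ2 u)))
    + (Fent E (t * d1 u + (1 - t) * d2 u) - (t * Fent E (d1 u) + (1 - t) * Fent E (d2 u)))
    with hgdef
  have key : ∀ u : ℝ,
      integrandG E A ρ (fun u => t * φ1 u + (1 - t) * φ2 u)
        (fun u => t * d1 u + (1 - t) * d2 u) u
      = t * integrandG E A ρ φ1 d1 u + (1 - t) * integrandG E A ρ φ2 d2 u + g u := by
    intro u
    simp only [integrandG, hgdef]
    ring
  have hI1 : IntervalIntegrable (integrandG E A ρ φ1 d1) volume (-1) 1 :=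
    integrandIntble E A ρ φ1 d1 hρ hφ1c hd1c hlow1
  have hI2 : IntervalIntegrable (integrandG E A ρ φ2 d2) volume (-1) 1 :=
    integrandIntble E A ρ φ2 d2 hρ hφ2c hd2c hlow2
  have hgc : ContinuousOn g (Set.Icc (-1:ℝ) 1) := by
    rw [hgdef]
    apply ContinuousOn.add
    · apply ContinuousOn.sub
      · apply ContinuousOn.add
        · exact continuousOn_const.mul ((continuousOn_const.add
            (Real.continuous_exp.comp_continuousOn hφ1c)).log
            (fun u _ => by simp only [Function.comp_apply, Pi.add_apply]; positivity))
        · exact continuousOn_const.mul ((continuousOn_const.add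
            (Real.continuous_exp.comp_continuousOn hφ2c)).log
            (fun u _ => by simp only [Function.comp_apply, Pi.add_apply]; positivity))
      · exact (continuousOn_const.add
          (Real.continuous_exp.comp_continuousOn hφcc)).log
          (fun u _ => by simp only [Function.comp_apply, Pi.add_apply]; positivity)
    · exact (contFent E hdcc hlowc).sub
        ((continuousOn_const.mul (contFent E hd1c hlow1)).add
          (continuousOn_const.mul (contFent E hd2c hlow2)))
  have hgInt : IntervalIntegrable g volume (-1) 1 := hgc.intervalIntegrable_of_Icc hIcc
  -- pointwise nonnegativity and strict positivity of g
  have hg0 : ∀ u ∈ Set.Icc (-1:ℝ) 1, 0 ≤ g u := by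
    intro u hu
    have hH := comb_le strictConcave_H (Set.mem_univ (φ1 u)) (Set.mem_univ (φ2 u)) ht0 ht1
    have hF := comb_le (strictConcave_F E) (Set.mem_Ioi.mpr (hlow1 u hu))
      (Set.mem_Ioi.mpr (hlow2 u hu)) ht0 ht1
    simp only [hgdef]
    linarith
  have hgpt : ∃ u ∈ Set.Icc (-1:ℝ) 1, 0 < g u := by
    simp only [Set.EqOn, not_forall] at hne
    obtain ⟨u0, hu0, hneq⟩ := hne
    refine ⟨u0, hu0, ?_⟩
    have hH := comb_lt strictConcave_H (Set.mem_univ (φ1 u0)) (Set.mem_univ (φ2 u0))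
      hneq ht0 ht1
    have hF := comb_le (strictConcave_F E) (Set.mem_Ioi.mpr (hlow1 u0 hu0))
      (Set.mem_Ioi.mpr (hlow2 u0 hu0)) ht0 ht1
    simp only [hgdef]
    linarith
  have hgpos : 0 < ∫ u in (-1:ℝ)..1, g u := by
    have := intervalIntegral.integral_lt_integral_of_continuousOn_of_le_of_exists_lt
      (by norm_num : (-1:ℝ) < 1) (continuousOn_const : ContinuousOn (fun _ => (0:ℝ)) _) hgc
      (fun x hx => hg0 x (Set.Ioc_subset_Icc_self hx)) hgpt
    simpa using this
  -- split the integral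
  have split : GEint E A ρ (fun u => t * φ1 u + (1 - t) * φ2 u)
      (fun u => t * d1 u + (1 - t) * d2 u)
      = t * GEint E A ρ φ1 d1 + (1 - t) * GEint E A ρ φ2 d2 + ∫ u in (-1:ℝ)..1, g u := by
    rw [GEint_eq, GEint_eq, GEint_eq]
    calc (∫ u in (-1:ℝ)..1, integrandG E A ρ (fun u => t * φ1 u + (1 - t) * φ2 u)
          (fun u => t * d1 u + (1 - t) * d2 u) u)
        = ∫ u in (-1:ℝ)..1, (t * integrandG E A ρ φ1 d1 u
            + (1 - t) * integrandG E A ρ φ2 d2 u + g u) := by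
          apply intervalIntegral.integral_congr
          intro u _
          exact key u
      _ = (t * ∫ u in (-1:ℝ)..1, integrandG E A ρ φ1 d1 u)
            + ((1 - t) * ∫ u in (-1:ℝ)..1, integrandG E A ρ φ2 d2 u)
            + ∫ u in (-1:ℝ)..1, g u := by
          rw [intervalIntegral.integral_add ((hI1.const_mul t).add (hI2.const_mul (1 - t))) hgInt,
            intervalIntegral.integral_add (hI1.const_mul t) (hI2.const_mul (1 - t)),
            intervalIntegral.integral_const_mul, intervalIntegral.integral_const_mul]
  rw [split]
  linarith

end
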